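/- A binary symmetric tensor A of odd order d = 2s+1 is completely positive if and only if H_3(y) ⪰ 0 and H_4(y) ⪰ 0, where y is the moment sequence associated with L_T(A) for T = [[1,1],[0,1]]. -/

import Mathlib

open Matrix MeasureTheory Set

noncomputable section

/-- The `d`-th symmetric tensor power `v^{⊗ d}` of a vector `v ∈ ℝ²`,
viewed as the array of entries indexed by `Fin d → Fin 2`. -/
def tpow (d : ℕ) (v : Fin 2 → ℝ) : (Fin d → Fin 2) → ℝ :=
  fun idx => ∏ k, v (idx k)

/-- A binary tensor is symmetric if its entries are invariant under index permutations. -/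
def IsSymTensor (d : ℕ) (A : (Fin d → Fin 2) → ℝ) : Prop :=
  ∀ (σ : Equiv.Perm (Fin d)) (idx : Fin d → Fin 2), A (idx ∘ σ) = A idx

/-- A binary tensor is completely positive (CP) if it is a finite sum of
`d`-th tensor powers of nonnegative vectors in `ℝ²`. -/
def IsCP (d : ℕ) (A : (Fin d → Fin 2) → ℝ) : Prop :=
  ∃ (r : ℕ) (v : Fin r → Fin 2 → ℝ),
    (∀ i j, 0 ≤ v i j) ∧ A = ∑ i, tpow d (v i)

/-- The cp-rank: the minimal length of a cp-decomposition. -/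
def cpRank (d : ℕ) (A : (Fin d → Fin 2) → ℝ) : ℕ :=
  sInf {r | ∃ v : Fin r → Fin 2 → ℝ,
    (∀ i j, 0 ≤ v i j) ∧ A = ∑ i, tpow d (v i)}

/-- The matrix `T = [[1,1],[0,1]]`. -/
def matT : Matrix (Fin 2) (Fin 2) ℝ := !![1, 1; 0, 1]

/-- The linear map `L_T` on binary tensors induced by a matrix `T`
(multilinear matrix multiplication by `T` in each mode);
it sends `u^{⊗ d}` to `(T u)^{⊗ d}`. -/
def Lmul (d : ℕ) (T : Matrix (Fin 2) (Fin 2) ℝ)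
    (A : (Fin d → Fin 2) → ℝ) : (Fin d → Fin 2) → ℝ :=
  fun idx => ∑ j : Fin d → Fin 2, (∏ k, T (idx k) (j k)) * A j

/-- The truncated moment sequence `y` associated to a binary tensor `A`:
`y k` is the entry of `L_T (A)` whose index has exactly `k` components equal to `2`
(here encoded as `1 : Fin 2`). -/
def momSeq (d : ℕ) (A : (Fin d → Fin 2) → ℝ) : ℕ → ℝ :=
  fun k => Lmul d matT A (fun i => if (i : ℕ) < k then 1 else 0)

/-- The Hankel moment matrix `H₁(y) = (y_{i+j})_{0 ≤ i,j ≤ s}`. -/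
def H1 (s : ℕ) (y : ℕ → ℝ) : Matrix (Fin (s + 1)) (Fin (s + 1)) ℝ :=
  fun i j => y ((i : ℕ) + (j : ℕ))

/-- The localizing Hankel matrix `H₂(y) = (y_{i+j+1} - y_{i+j+2})_{0 ≤ i,j ≤ s-1}`. -/
def H2 (s : ℕ) (y : ℕ → ℝ) : Matrix (Fin s) (Fin s) ℝ :=
  fun i j => y ((i : ℕ) + (j : ℕ) + 1) - y ((i : ℕ) + (j : ℕ) + 2)

/-- The localizing Hankel matrix `H₃(y) = (y_{i+j+1})_{0 ≤ i,j ≤ s}`. -/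
def H3 (s : ℕ) (y : ℕ → ℝ) : Matrix (Fin (s + 1)) (Fin (s + 1)) ℝ :=
  fun i j => y ((i : ℕ) + (j : ℕ) + 1)

/-- The localizing Hankel matrix `H₄(y) = (y_{i+j} - y_{i+j+1})_{0 ≤ i,j ≤ s}`. -/
def H4 (s : ℕ) (y : ℕ → ℝ) : Matrix (Fin (s + 1)) (Fin (s + 1)) ℝ :=
  fun i j => y ((i : ℕ) + (j : ℕ)) - y ((i : ℕ) + (j : ℕ) + 1)


open Polynomial

def canon (d k : ℕ) : Fin d → Fin 2 := fun i => if (i : ℕ) < k then 1 else 0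

def cnt {d : ℕ} (idx : Fin d → Fin 2) : ℕ :=
  (Finset.univ.filter (fun i => idx i = 1)).card

lemma cnt_le {d : ℕ} (idx : Fin d → Fin 2) : cnt idx ≤ d := by
  classical
  calc cnt idx ≤ (Finset.univ : Finset (Fin d)).card := Finset.card_filter_le _ _
  _ = d := by simp

lemma card_filter_lt (d k : ℕ) (h : k ≤ d) :
    ((Finset.univ : Finset (Fin d)).filter (fun i : Fin d => (i : ℕ) < k)).card = k := by
  classical
  rcases eq_or_lt_of_le h with heq | h
  · subst heq
    have h2 : (Finset.univ : Finset (Fin k)).filter (fun i : Fin k => (i : ℕ) < k) = Finset.univ := by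
      apply Finset.filter_true_of_mem; intro i _; exact i.isLt
    simp [h2]
  · have h2 : (Finset.univ : Finset (Fin d)).filter (fun i : Fin d => (i : ℕ) < k)
        = Finset.Iio (⟨k, h⟩ : Fin d) := by
      ext i; simp [Fin.lt_def]
    rw [h2, Fin.card_Iio]

lemma cnt_canon (d k : ℕ) (h : k ≤ d) : cnt (canon d k) = k := by
  classical
  have h1 : ∀ i : Fin d, (canon d k i = 1) ↔ ((i : ℕ) < k) := by
    intro i; unfold canon; split_ifs with hh <;> simp [hh]
  show (Finset.univ.filter (fun i : Fin d => canon d k i = 1)).card = k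
  rw [Finset.filter_congr (fun i _ => by rw [h1 i] : ∀ i ∈ Finset.univ, (canon d k i = 1) ↔ ((i : ℕ) < k))]
  exact card_filter_lt d k h

lemma exists_perm_canon {d : ℕ} (idx : Fin d → Fin 2) :
    ∃ σ : Equiv.Perm (Fin d), idx ∘ σ = canon d (cnt idx) := by
  classical
  set k := cnt idx with hk
  have hkd : k ≤ d := cnt_le idx
  have hc1 : Fintype.card {i : Fin d // canon d k i = 1} = Fintype.card {i : Fin d // idx i = 1} := by
    rw [Fintype.card_subtype, Fintype.card_subtype]
    have h3 := cnt_canon d k hkd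
    rw [show ((Finset.univ.filter (fun i : Fin d => canon d k i = 1)).card = k) from h3, hk]
    rfl
  have hc0 : Fintype.card {i : Fin d // ¬ canon d k i = 1} = Fintype.card {i : Fin d // ¬ idx i = 1} := by
    rw [Fintype.card_subtype_compl, Fintype.card_subtype_compl, hc1]
  let e1 := Fintype.equivOfCardEq hc1
  let e0 := Fintype.equivOfCardEq hc0
  refine ⟨(Equiv.sumCompl (fun i => canon d k i = 1)).symm.trans
    ((e1.sumCongr e0).trans (Equiv.sumCompl (fun i => idx i = 1))), ?_⟩
  funext i
  simp only [Function.comp_apply, Equiv.trans_apply]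
  by_cases h : canon d k i = 1
  · rw [Equiv.sumCompl_symm_apply_of_pos (p := fun i => canon d k i = 1) h]
    simp only [Equiv.sumCongr_apply, Sum.map_inl, Equiv.sumCompl_apply_inl]
    rw [h]; exact (e1 ⟨i, h⟩).2
  · rw [Equiv.sumCompl_symm_apply_of_neg (p := fun i => canon d k i = 1) h]
    simp only [Equiv.sumCongr_apply, Sum.map_inr, Equiv.sumCompl_apply_inr]
    have h2 := (e0 ⟨i, h⟩).2
    have h3 : ∀ x : Fin 2, x ≠ 1 → x = 0 := by decide
    rw [h3 _ h2, h3 _ h]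

lemma symTensor_ext {d : ℕ} {A B : (Fin d → Fin 2) → ℝ} (hA : IsSymTensor d A)
    (hB : IsSymTensor d B) (h : ∀ k ≤ d, A (canon d k) = B (canon d k)) : A = B := by
  funext idx
  obtain ⟨σ, hσ⟩ := exists_perm_canon idx
  rw [← hA σ idx, ← hB σ idx, hσ, h _ (cnt_le idx)]

lemma Lmul_sum {d r : ℕ} (T : Matrix (Fin 2) (Fin 2) ℝ) (f : Fin r → (Fin d → Fin 2) → ℝ) :
    Lmul d T (∑ i, f i) = ∑ i, Lmul d T (f i) := by
  funext idx
  simp only [Lmul, Finset.sum_apply, Finset.mul_sum]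
  exact Finset.sum_comm

lemma Lmul_tpow {d : ℕ} (T : Matrix (Fin 2) (Fin 2) ℝ) (v : Fin 2 → ℝ) :
    Lmul d T (tpow d v) = tpow d (T *ᵥ v) := by
  funext idx
  simp only [Lmul, tpow]
  have h1 : ∀ j : Fin d → Fin 2, (∏ k, T (idx k) (j k)) * ∏ k, v (j k)
      = ∏ k, (T (idx k) (j k) * v (j k)) := fun j => (Finset.prod_mul_distrib).symm
  simp only [h1]
  rw [show (Finset.univ : Finset (Fin d → Fin 2)) = Fintype.piFinset (fun _ => Finset.univ) by
    simp]
  rw [← Finset.prod_univ_sum (fun _ => Finset.univ) (fun k j => T (idx k) j * v j)]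
  exact Finset.prod_congr rfl fun k _ => by simp [Matrix.mulVec, dotProduct]

lemma Lmul_Lmul {d : ℕ} (T U : Matrix (Fin 2) (Fin 2) ℝ) (A : (Fin d → Fin 2) → ℝ) :
    Lmul d T (Lmul d U A) = Lmul d (T * U) A := by
  funext idx
  simp only [Lmul, Finset.mul_sum]
  rw [Finset.sum_comm]
  apply Finset.sum_congr rfl
  intro l _
  have h1 : ∀ j : Fin d → Fin 2, (∏ k, T (idx k) (j k)) * ((∏ k, U (j k) (l k)) * A l)
      = (∏ k, (T (idx k) (j k) * U (j k) (l k))) * A l := by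
    intro j; rw [Finset.prod_mul_distrib]; ring
  simp only [h1]
  rw [← Finset.sum_mul]
  congr 1
  rw [show (Finset.univ : Finset (Fin d → Fin 2)) = Fintype.piFinset (fun _ => Finset.univ) by
    simp]
  rw [← Finset.prod_univ_sum (fun _ => Finset.univ) (fun k j => T (idx k) j * U j (l k))]
  apply Finset.prod_congr rfl
  intro k _
  simp [Matrix.mul_apply]

lemma Lmul_one {d : ℕ} (A : (Fin d → Fin 2) → ℝ) : Lmul d 1 A = A := by
  funext idx
  simp only [Lmul]
  have h1 : ∀ j : Fin d → Fin 2, (∏ k, (1 : Matrix (Fin 2) (Fin 2) ℝ) (idx k) (j k))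
      = if idx = j then (1:ℝ) else 0 := by
    intro j
    simp only [Matrix.one_apply]
    rw [Finset.prod_boole]
    congr 1
    simp [funext_iff]
  simp only [h1, ite_mul, one_mul, zero_mul]
  simp

def matS : Matrix (Fin 2) (Fin 2) ℝ := !![1, -1; 0, 1]

lemma matS_matT : matS * matT = 1 := by
  ext i j
  fin_cases i <;> fin_cases j <;>
    simp [matS, matT, Matrix.mul_apply, Fin.sum_univ_two, Matrix.one_apply]

lemma Lmul_matT_inj {d : ℕ} {A B : (Fin d → Fin 2) → ℝ}
    (h : Lmul d matT A = Lmul d matT B) : A = B := by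
  have h2 := congrArg (Lmul d matS) h
  rwa [Lmul_Lmul, Lmul_Lmul, matS_matT, Lmul_one, Lmul_one] at h2

lemma tpow_sym {d : ℕ} (v : Fin 2 → ℝ) : IsSymTensor d (tpow d v) := by
  intro σ idx
  simp only [tpow, Function.comp_apply]
  exact Equiv.prod_comp σ (fun k => v (idx k))

lemma sum_tpow_sym {d r : ℕ} (v : Fin r → Fin 2 → ℝ) :
    IsSymTensor d (∑ i, tpow d (v i)) := by
  intro σ idx
  simp only [Finset.sum_apply]
  exact Finset.sum_congr rfl fun i _ => tpow_sym (v i) σ idx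

lemma Lmul_sym {d : ℕ} (T : Matrix (Fin 2) (Fin 2) ℝ) {A : (Fin d → Fin 2) → ℝ}
    (hA : IsSymTensor d A) : IsSymTensor d (Lmul d T A) := by
  intro σ idx
  simp only [Lmul, Function.comp_apply]
  apply Fintype.sum_equiv (Equiv.arrowCongr σ (Equiv.refl (Fin 2)))
  intro j
  have h1 : (Equiv.arrowCongr σ (Equiv.refl (Fin 2))) j = j ∘ ⇑σ.symm := by
    funext i; simp [Equiv.arrowCongr]
  rw [h1]
  have h2 : A (j ∘ ⇑σ.symm) = A j := hA σ.symm j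
  rw [h2]
  congr 1
  rw [← Equiv.prod_comp σ (fun k => T (idx k) ((j ∘ ⇑σ.symm) k))]
  apply Finset.prod_congr rfl
  intro k _
  simp

lemma tpow_canon {d : ℕ} (w : Fin 2 → ℝ) (k : ℕ) (hk : k ≤ d) :
    tpow d w (canon d k) = w 1 ^ k * w 0 ^ (d - k) := by
  classical
  unfold tpow canon
  simp only [apply_ite w]
  rw [Finset.prod_ite (fun _ => w 1) (fun _ => w 0)]
  rw [Finset.prod_const, Finset.prod_const, card_filter_lt d k hk]
  congr 2
  rw [Finset.filter_not, Finset.card_sdiff_of_subset (Finset.filter_subset _ _)]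
  rw [card_filter_lt d k hk, Finset.card_univ, Fintype.card_fin]

lemma matT_mulVec (w : Fin 2 → ℝ) : matT *ᵥ w = ![w 0 + w 1, w 1] := by
  funext i
  fin_cases i <;> simp [matT, Matrix.mulVec, dotProduct, Fin.sum_univ_two]

lemma momSeq_canon {d : ℕ} (A : (Fin d → Fin 2) → ℝ) (k : ℕ) :
    momSeq d A k = Lmul d matT A (canon d k) := rfl

lemma momSeq_sum_tpow {d r : ℕ} (v : Fin r → Fin 2 → ℝ) (k : ℕ) (hk : k ≤ d) :
    momSeq d (∑ i, tpow d (v i)) k = ∑ i, (v i 0 + v i 1) ^ (d - k) * (v i 1) ^ k := by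
  rw [momSeq_canon, Lmul_sum]
  rw [Finset.sum_apply]
  apply Finset.sum_congr rfl
  intro i _
  rw [Lmul_tpow, matT_mulVec, tpow_canon _ k hk]
  simp [mul_comm]

lemma sum_comm3 {α β γ : Type*} [Fintype α] [Fintype β] [Fintype γ] (F : α → β → γ → ℝ) :
    ∑ a, ∑ b, ∑ i, F a b i = ∑ i, ∑ a, ∑ b, F a b i := by
  have h1 : ∀ a, (∑ b, ∑ i, F a b i) = ∑ i, ∑ b, F a b i := fun a => Finset.sum_comm
  simp_rw [h1]
  exact Finset.sum_comm

lemma quad_H3 {s r : ℕ} (c b : Fin r → ℝ) (y : ℕ → ℝ)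
    (hy : ∀ k ≤ 2*s+1, y k = ∑ i, c i ^ (2*s+1-k) * b i ^ k) (x : Fin (s+1) → ℝ) :
    x ⬝ᵥ (H3 s y *ᵥ x) = ∑ i, b i * (∑ a, x a * c i ^ (s - (a:ℕ)) * b i ^ (a:ℕ))^2 := by
  simp only [dotProduct, Matrix.mulVec, H3]
  have key : ∀ (a b' : Fin (s+1)) (i : Fin r),
      x a * (c i ^ (2*s+1-((a:ℕ)+(b':ℕ)+1)) * b i ^ ((a:ℕ)+(b':ℕ)+1) * x b')
      = b i * (x a * c i ^ (s-(a:ℕ)) * b i ^ (a:ℕ)) * (x b' * c i ^ (s-(b':ℕ)) * b i ^ (b':ℕ)) := by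
    intro a b' i
    rw [show 2*s+1-((a:ℕ)+(b':ℕ)+1) = (s-(a:ℕ))+(s-(b':ℕ)) from by omega,
        pow_add, pow_add, pow_add, pow_one]
    ring
  calc ∑ a : Fin (s+1), x a * ∑ b' : Fin (s+1), y ((a:ℕ)+(b':ℕ)+1) * x b'
      = ∑ a : Fin (s+1), ∑ b' : Fin (s+1), ∑ i : Fin r, x a * (c i ^ (2*s+1-((a:ℕ)+(b':ℕ)+1)) * b i ^ ((a:ℕ)+(b':ℕ)+1) * x b') := by
        apply Finset.sum_congr rfl; intro a _
        rw [Finset.mul_sum]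
        apply Finset.sum_congr rfl; intro b' _
        rw [hy _ (by omega), Finset.sum_mul, Finset.mul_sum]
    _ = ∑ a : Fin (s+1), ∑ b' : Fin (s+1), ∑ i : Fin r, b i * (x a * c i ^ (s-(a:ℕ)) * b i ^ (a:ℕ)) * (x b' * c i ^ (s-(b':ℕ)) * b i ^ (b':ℕ)) := by
        apply Finset.sum_congr rfl; intro a _
        apply Finset.sum_congr rfl; intro b' _
        apply Finset.sum_congr rfl; intro i _
        exact key a b' i
    _ = ∑ i : Fin r, ∑ a : Fin (s+1), ∑ b' : Fin (s+1), b i * (x a * c i ^ (s-(a:ℕ)) * b i ^ (a:ℕ)) * (x b' * c i ^ (s-(b':ℕ)) * b i ^ (b':ℕ)) := by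
        exact sum_comm3 _
    _ = ∑ i : Fin r, b i * (∑ a : Fin (s+1), x a * c i ^ (s - (a:ℕ)) * b i ^ (a:ℕ))^2 := by
        apply Finset.sum_congr rfl; intro i _
        rw [sq, Finset.sum_mul_sum, Finset.mul_sum]
        apply Finset.sum_congr rfl; intro a _
        rw [Finset.mul_sum]
        apply Finset.sum_congr rfl; intro b' _
        ring

lemma quad_H4 {s r : ℕ} (c b : Fin r → ℝ) (y : ℕ → ℝ)
    (hy : ∀ k ≤ 2*s+1, y k = ∑ i, c i ^ (2*s+1-k) * b i ^ k) (x : Fin (s+1) → ℝ) :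
    x ⬝ᵥ (H4 s y *ᵥ x) = ∑ i, (c i - b i) * (∑ a, x a * c i ^ (s - (a:ℕ)) * b i ^ (a:ℕ))^2 := by
  simp only [dotProduct, Matrix.mulVec, H4]
  have key : ∀ (a b' : Fin (s+1)) (i : Fin r),
      x a * ((c i ^ (2*s+1-((a:ℕ)+(b':ℕ))) * b i ^ ((a:ℕ)+(b':ℕ))
        - c i ^ (2*s+1-((a:ℕ)+(b':ℕ)+1)) * b i ^ ((a:ℕ)+(b':ℕ)+1)) * x b')
      = (c i - b i) * (x a * c i ^ (s-(a:ℕ)) * b i ^ (a:ℕ)) * (x b' * c i ^ (s-(b':ℕ)) * b i ^ (b':ℕ)) := by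
    intro a b' i
    rw [show 2*s+1-((a:ℕ)+(b':ℕ)) = ((s-(a:ℕ))+(s-(b':ℕ)))+1 from by omega,
        show 2*s+1-((a:ℕ)+(b':ℕ)+1) = (s-(a:ℕ))+(s-(b':ℕ)) from by omega]
    rw [pow_add, pow_add, pow_add, pow_add, pow_add, pow_one, pow_one]
    ring
  calc ∑ a : Fin (s+1), x a * ∑ b' : Fin (s+1), (y ((a:ℕ)+(b':ℕ)) - y ((a:ℕ)+(b':ℕ)+1)) * x b'
      = ∑ a : Fin (s+1), ∑ b' : Fin (s+1), ∑ i : Fin r, x a * ((c i ^ (2*s+1-((a:ℕ)+(b':ℕ))) * b i ^ ((a:ℕ)+(b':ℕ))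
          - c i ^ (2*s+1-((a:ℕ)+(b':ℕ)+1)) * b i ^ ((a:ℕ)+(b':ℕ)+1)) * x b') := by
        apply Finset.sum_congr rfl; intro a _
        rw [Finset.mul_sum]
        apply Finset.sum_congr rfl; intro b' _
        rw [hy _ (by omega), hy _ (by omega), ← Finset.sum_sub_distrib, Finset.sum_mul, Finset.mul_sum]
    _ = ∑ a : Fin (s+1), ∑ b' : Fin (s+1), ∑ i : Fin r, (c i - b i) * (x a * c i ^ (s-(a:ℕ)) * b i ^ (a:ℕ)) * (x b' * c i ^ (s-(b':ℕ)) * b i ^ (b':ℕ)) := by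
        apply Finset.sum_congr rfl; intro a _
        apply Finset.sum_congr rfl; intro b' _
        apply Finset.sum_congr rfl; intro i _
        exact key a b' i
    _ = ∑ i : Fin r, ∑ a : Fin (s+1), ∑ b' : Fin (s+1), (c i - b i) * (x a * c i ^ (s-(a:ℕ)) * b i ^ (a:ℕ)) * (x b' * c i ^ (s-(b':ℕ)) * b i ^ (b':ℕ)) := by
        exact sum_comm3 _
    _ = ∑ i : Fin r, (c i - b i) * (∑ a : Fin (s+1), x a * c i ^ (s - (a:ℕ)) * b i ^ (a:ℕ))^2 := by
        apply Finset.sum_congr rfl; intro i _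
        rw [sq, Finset.sum_mul_sum, Finset.mul_sum]
        apply Finset.sum_congr rfl; intro a _
        rw [Finset.mul_sum]
        apply Finset.sum_congr rfl; intro b' _
        ring

lemma H3_herm (s : ℕ) (y : ℕ → ℝ) : (H3 s y).IsHermitian := by
  unfold Matrix.IsHermitian
  ext i j
  simp only [Matrix.conjTranspose_apply, H3, star_trivial]
  congr 1
  omega

lemma H4_herm (s : ℕ) (y : ℕ → ℝ) : (H4 s y).IsHermitian := by
  unfold Matrix.IsHermitian
  ext i j
  simp only [Matrix.conjTranspose_apply, H4, star_trivial]
  congr 2 <;> omega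

lemma necessity {s r : ℕ} (v : Fin r → Fin 2 → ℝ) (hv : ∀ i j, 0 ≤ v i j) :
    (H3 s (momSeq (2*s+1) (∑ i, tpow (2*s+1) (v i)))).PosSemidef ∧
      (H4 s (momSeq (2*s+1) (∑ i, tpow (2*s+1) (v i)))).PosSemidef := by
  set y := momSeq (2*s+1) (∑ i, tpow (2*s+1) (v i)) with hydef
  have hy : ∀ k ≤ 2*s+1, y k = ∑ i, (v i 0 + v i 1) ^ (2*s+1-k) * (v i 1) ^ k := by
    intro k hk
    rw [hydef, momSeq_sum_tpow v k hk]
  constructor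
  · refine .of_dotProduct_mulVec_nonneg (H3_herm s y) fun x => ?_
    have hstar : star x = x := by funext i; exact star_trivial _
    rw [hstar, quad_H3 (fun i => v i 0 + v i 1) (fun i => v i 1) y hy x]
    apply Finset.sum_nonneg
    intro i _
    exact mul_nonneg (hv i 1) (sq_nonneg _)
  · refine .of_dotProduct_mulVec_nonneg (H4_herm s y) fun x => ?_
    have hstar : star x = x := by funext i; exact star_trivial _
    rw [hstar, quad_H4 (fun i => v i 0 + v i 1) (fun i => v i 1) y hy x]
    apply Finset.sum_nonneg
    intro i _
    have h1 : v i 0 + v i 1 - v i 1 = v i 0 := by ring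
    rw [h1]
    exact mul_nonneg (hv i 0) (sq_nonneg _)


inductive PGen : ℕ → ℝ[X] → Prop
  | sq (p : ℝ[X]) (n : ℕ) (h : 2 * p.natDegree ≤ n) : PGen n (p ^ 2)
  | xsq (p : ℝ[X]) (n : ℕ) (h : 2 * p.natDegree + 1 ≤ n) : PGen n (X * p ^ 2)
  | ysq (p : ℝ[X]) (n : ℕ) (h : 2 * p.natDegree + 1 ≤ n) : PGen n ((1 - X) * p ^ 2)
  | xysq (p : ℝ[X]) (n : ℕ) (h : 2 * p.natDegree + 2 ≤ n) : PGen n (X * (1 - X) * p ^ 2)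

lemma nd_mul (p q : ℝ[X]) : (p * q).natDegree ≤ p.natDegree + q.natDegree :=
  natDegree_mul_le

lemma PGen.mono {m n : ℕ} {f : ℝ[X]} (h : PGen m f) (hmn : m ≤ n) : PGen n f := by
  cases h with
  | sq p _ h => exact .sq p n (by omega)
  | xsq p _ h => exact .xsq p n (by omega)
  | ysq p _ h => exact .ysq p n (by omega)
  | xysq p _ h => exact .xysq p n (by omega)

lemma PGen.mul {m n : ℕ} {f g : ℝ[X]} (hf : PGen m f) (hg : PGen n g) :
    PGen (m + n) (f * g) := by
  have hnd := nd_mul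
  cases hf with
  | sq p _ hp =>
    cases hg with
    | sq q _ hq =>
      rw [show p^2 * q^2 = (p*q)^2 by ring]
      exact .sq _ _ (by have := hnd p q; omega)
    | xsq q _ hq =>
      rw [show p^2 * (X * q^2) = X * (p*q)^2 by ring]
      exact .xsq _ _ (by have := hnd p q; omega)
    | ysq q _ hq =>
      rw [show p^2 * ((1-X) * q^2) = (1-X) * (p*q)^2 by ring]
      exact .ysq _ _ (by have := hnd p q; omega)
    | xysq q _ hq =>
      rw [show p^2 * (X*(1-X) * q^2) = X*(1-X) * (p*q)^2 by ring]
      exact .xysq _ _ (by have := hnd p q; omega)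
  | xsq p _ hp =>
    cases hg with
    | sq q _ hq =>
      rw [show (X * p^2) * q^2 = X * (p*q)^2 by ring]
      exact .xsq _ _ (by have := hnd p q; omega)
    | xsq q _ hq =>
      rw [show (X * p^2) * (X * q^2) = (X * (p*q))^2 by ring]
      refine .sq _ _ ?_
      have h1 := nd_mul X (p*q)
      have h2 := hnd p q
      have h3 : (X : ℝ[X]).natDegree ≤ 1 := natDegree_X_le
      omega
    | ysq q _ hq =>
      rw [show (X * p^2) * ((1-X) * q^2) = X*(1-X) * (p*q)^2 by ring]
      exact .xysq _ _ (by have := hnd p q; omega)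
    | xysq q _ hq =>
      rw [show (X * p^2) * (X*(1-X) * q^2) = (1-X) * (X * (p*q))^2 by ring]
      refine .ysq _ _ ?_
      have h1 := nd_mul X (p*q)
      have h2 := hnd p q
      have h3 : (X : ℝ[X]).natDegree ≤ 1 := natDegree_X_le
      omega
  | ysq p _ hp =>
    cases hg with
    | sq q _ hq =>
      rw [show ((1-X) * p^2) * q^2 = (1-X) * (p*q)^2 by ring]
      exact .ysq _ _ (by have := hnd p q; omega)
    | xsq q _ hq =>
      rw [show ((1-X) * p^2) * (X * q^2) = X*(1-X) * (p*q)^2 by ring]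
      exact .xysq _ _ (by have := hnd p q; omega)
    | ysq q _ hq =>
      rw [show ((1-X) * p^2) * ((1-X) * q^2) = ((1-X) * (p*q))^2 by ring]
      refine .sq _ _ ?_
      have h1 := nd_mul (1-X : ℝ[X]) (p*q)
      have h2 := hnd p q
      have h3 : (1 - X : ℝ[X]).natDegree ≤ 1 := by
        refine le_trans (natDegree_sub_le _ _) ?_
        simp
      omega
    | xysq q _ hq =>
      rw [show ((1-X) * p^2) * (X*(1-X) * q^2) = X * ((1-X) * (p*q))^2 by ring]
      refine .xsq _ _ ?_
      have h1 := nd_mul (1-X : ℝ[X]) (p*q)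
      have h2 := hnd p q
      have h3 : (1 - X : ℝ[X]).natDegree ≤ 1 := by
        refine le_trans (natDegree_sub_le _ _) ?_
        simp
      omega
  | xysq p _ hp =>
    cases hg with
    | sq q _ hq =>
      rw [show (X*(1-X) * p^2) * q^2 = X*(1-X) * (p*q)^2 by ring]
      exact .xysq _ _ (by have := hnd p q; omega)
    | xsq q _ hq =>
      rw [show (X*(1-X) * p^2) * (X * q^2) = (1-X) * (X * (p*q))^2 by ring]
      refine .ysq _ _ ?_
      have h1 := nd_mul X (p*q)
      have h2 := hnd p q
      have h3 : (X : ℝ[X]).natDegree ≤ 1 := natDegree_X_le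
      omega
    | ysq q _ hq =>
      rw [show (X*(1-X) * p^2) * ((1-X) * q^2) = X * ((1-X) * (p*q))^2 by ring]
      refine .xsq _ _ ?_
      have h1 := nd_mul (1-X : ℝ[X]) (p*q)
      have h2 := hnd p q
      have h3 : (1 - X : ℝ[X]).natDegree ≤ 1 := by
        refine le_trans (natDegree_sub_le _ _) ?_
        simp
      omega
    | xysq q _ hq =>
      rw [show (X*(1-X) * p^2) * (X*(1-X) * q^2) = (X*(1-X) * (p*q))^2 by ring]
      refine .sq _ _ ?_
      have h1 := nd_mul (X*(1-X) : ℝ[X]) (p*q)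
      have h2 := hnd p q
      have h3 : (X*(1-X) : ℝ[X]).natDegree ≤ 2 := by
        refine le_trans (nd_mul _ _) ?_
        have h4 : (1 - X : ℝ[X]).natDegree ≤ 1 := by
          refine le_trans (natDegree_sub_le _ _) ?_
          simp
        have h5 : (X : ℝ[X]).natDegree ≤ 1 := natDegree_X_le
        omega
      omega

def PRep (n : ℕ) (f : ℝ[X]) : Prop := f ∈ AddSubmonoid.closure {g | PGen n g}

lemma PRep.gen {n : ℕ} {f : ℝ[X]} (h : PGen n f) : PRep n f :=
  AddSubmonoid.subset_closure h

lemma PRep.zero (n : ℕ) : PRep n 0 := zero_mem _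

lemma PRep.add {n : ℕ} {f g : ℝ[X]} (hf : PRep n f) (hg : PRep n g) : PRep n (f + g) :=
  add_mem hf hg

lemma PRep.mono {m n : ℕ} {f : ℝ[X]} (hf : PRep m f) (hmn : m ≤ n) : PRep n f := by
  refine AddSubmonoid.closure_mono ?_ hf
  intro g hg
  exact PGen.mono hg hmn

lemma PRep.mul {m n : ℕ} {f g : ℝ[X]} (hf : PRep m f) (hg : PRep n g) :
    PRep (m + n) (f * g) := by
  unfold PRep at *
  refine AddSubmonoid.closure_induction (motive := fun f _ => f * g ∈ AddSubmonoid.closure {g | PGen (m+n) g})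
    ?_ ?_ ?_ hf
  · intro x hx
    refine AddSubmonoid.closure_induction (motive := fun y _ => x * y ∈ AddSubmonoid.closure {g | PGen (m+n) g})
      ?_ ?_ ?_ hg
    · intro y hy
      exact AddSubmonoid.subset_closure (PGen.mul hx hy)
    · show x * 0 ∈ _
      rw [mul_zero]; exact zero_mem _
    · intro y z _ _ h1 h2
      show x * (y + z) ∈ _
      rw [mul_add]; exact add_mem h1 h2
  · show (0:ℝ[X]) * g ∈ _
    rw [zero_mul]; exact zero_mem _
  · intro a b _ _ h1 h2
    show (a + b) * g ∈ _
    rw [add_mul]; exact add_mem h1 h2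

lemma PRep.C_nonneg {n : ℕ} {c : ℝ} (hc : 0 ≤ c) : PRep n (C c) := by
  have h1 : (C (Real.sqrt c))^2 = C c := by
    rw [← _root_.map_pow, Real.sq_sqrt hc]
  refine PRep.gen ?_
  rw [← h1]
  exact PGen.sq _ _ (by simp)

lemma PRep.X' : PRep 1 (X : ℝ[X]) := by
  have h1 : (X : ℝ[X]) = X * 1^2 := by ring
  rw [h1]
  exact PRep.gen (PGen.xsq 1 1 (by simp))

lemma PRep.oneSubX : PRep 1 ((1 : ℝ[X]) - X) := by
  have h1 : (1 : ℝ[X]) - X = (1-X) * 1^2 := by ring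
  rw [h1]
  exact PRep.gen (PGen.ysq 1 1 (by simp))

lemma PRep.X_sub_C {r : ℝ} (hr : r ≤ 0) : PRep 1 (X - C r) := by
  have h1 : (X : ℝ[X]) - C r = X + C (-r) := by
    rw [_root_.map_neg]; ring
  rw [h1]
  exact PRep.add PRep.X' (PRep.C_nonneg (by linarith))

lemma PRep.C_sub_X {r : ℝ} (hr : 1 ≤ r) : PRep 1 (C r - X) := by
  have h1 : C r - (X : ℝ[X]) = (1 - X) + C (r - 1) := by
    rw [_root_.map_sub, C_1]; ring
  rw [h1]
  exact PRep.add PRep.oneSubX (PRep.C_nonneg (by linarith))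

lemma PRep.quad {a b : ℝ} (hb : 0 ≤ b) : PRep 2 ((X - C a)^2 + C b) := by
  refine PRep.add (PRep.gen (PGen.sq _ _ ?_)) (PRep.C_nonneg hb)
  rw [natDegree_X_sub_C]

lemma eval_nonneg_of_right (g : ℝ[X]) (r : ℝ) (hr : r < 1)
    (h : ∀ t, r < t → t ≤ 1 → 0 ≤ g.eval t) : 0 ≤ g.eval r := by
  have hc : Filter.Tendsto (fun t => g.eval t) (nhdsWithin r (Ioi r)) (nhds (g.eval r)) :=
    (g.continuousAt.continuousWithinAt)
  refine ge_of_tendsto hc ?_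
  filter_upwards [Ioc_mem_nhdsGT_of_mem (Set.mem_Ico.mpr ⟨le_refl r, hr⟩)] with t ht
  exact h t ht.1 ht.2

lemma eval_nonneg_of_left (g : ℝ[X]) (r : ℝ) (hr : 0 < r)
    (h : ∀ t, 0 ≤ t → t < r → 0 ≤ g.eval t) : 0 ≤ g.eval r := by
  have hc : Filter.Tendsto (fun t => g.eval t) (nhdsWithin r (Iio r)) (nhds (g.eval r)) :=
    (g.continuousAt.continuousWithinAt)
  refine ge_of_tendsto hc ?_
  filter_upwards [Ico_mem_nhdsLT_of_mem (Set.mem_Ioc.mpr ⟨hr, le_refl r⟩)] with t ht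
  exact h t ht.1 ht.2

theorem prep_of_nonneg (f : ℝ[X]) (hf : ∀ t ∈ Icc (0:ℝ) 1, 0 ≤ f.eval t) :
    PRep f.natDegree f := by
  suffices H : ∀ (n : ℕ) (f : ℝ[X]), f.natDegree = n →
      (∀ t ∈ Icc (0:ℝ) 1, 0 ≤ f.eval t) → PRep n f from H _ f rfl hf
  intro n
  induction n using Nat.strong_induction_on with
  | _ n IH =>
  intro f hdeg hf
  rcases Nat.eq_zero_or_pos n with h0 | hpos
  · subst h0
    rw [eq_C_of_natDegree_eq_zero hdeg]
    refine PRep.C_nonneg ?_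
    have h1 := hf 0 ⟨le_refl 0, zero_le_one⟩
    rwa [← coeff_zero_eq_eval_zero] at h1
  · have hf0 : f ≠ 0 := by
      intro h
      rw [h, natDegree_zero] at hdeg
      omega
    by_cases hroot : ∃ r : ℝ, f.IsRoot r
    · obtain ⟨r, hr⟩ := hroot
      rcases le_or_gt r 0 with hr0 | hr0
      · -- root r ≤ 0
        obtain ⟨g, hg⟩ := dvd_iff_isRoot.mpr hr
        have hgne : g ≠ 0 := by rintro rfl; rw [mul_zero] at hg; exact hf0 hg
        have hdg : f.natDegree = 1 + g.natDegree := by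
          rw [hg, natDegree_mul (X_sub_C_ne_zero r) hgne, natDegree_X_sub_C]
        have hgnn : ∀ t ∈ Icc (0:ℝ) 1, 0 ≤ g.eval t := by
          intro t ht
          rcases eq_or_lt_of_le (le_trans hr0 ht.1) with heq | hlt
          · -- r = t, forces r = t = 0
            have ht0 : t = 0 := le_antisymm (by linarith [ht.1, heq ▸ hr0]) ht.1
            subst ht0
            refine eval_nonneg_of_right g 0 one_pos ?_
            intro u hu1 hu2
            have hfu := hf u ⟨le_of_lt hu1, hu2⟩
            rw [hg, eval_mul, eval_sub, eval_X, eval_C] at hfu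
            nlinarith
          · have hfu := hf t ht
            rw [hg, eval_mul, eval_sub, eval_X, eval_C] at hfu
            nlinarith
        have hrep := IH g.natDegree (by omega) g rfl hgnn
        rw [hg, show n = 1 + g.natDegree by omega]
        exact PRep.mul (PRep.X_sub_C hr0) hrep
      rcases lt_or_ge r 1 with hr1 | hr1
      · -- 0 < r < 1
        obtain ⟨g, hg⟩ := dvd_iff_isRoot.mpr hr
        have hgne : g ≠ 0 := by rintro rfl; rw [mul_zero] at hg; exact hf0 hg
        have hgleft : ∀ t, 0 ≤ t → t < r → g.eval t ≤ 0 := by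
          intro t h1 h2
          have hfu := hf t ⟨h1, by linarith⟩
          rw [hg, eval_mul, eval_sub, eval_X, eval_C] at hfu
          nlinarith
        have hgright : ∀ t, r < t → t ≤ 1 → 0 ≤ g.eval t := by
          intro t h1 h2
          have hfu := hf t ⟨by linarith, h2⟩
          rw [hg, eval_mul, eval_sub, eval_X, eval_C] at hfu
          nlinarith
        have hgr0 : g.IsRoot r := by
          have hA : 0 ≤ g.eval r := eval_nonneg_of_right g r hr1 hgright
          have hB : 0 ≤ (-g).eval r := by
            refine eval_nonneg_of_left (-g) r hr0 ?_
            intro t h1 h2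
            rw [eval_neg]
            linarith [hgleft t h1 h2]
          rw [eval_neg] at hB
          exact le_antisymm (by linarith) hA
        obtain ⟨h, hh⟩ := dvd_iff_isRoot.mpr hgr0
        have hf2 : f = (X - C r)^2 * h := by rw [hg, hh]; ring
        have hhne : h ≠ 0 := by rintro rfl; rw [mul_zero] at hf2; exact hf0 hf2
        have hdd : f.natDegree = 2 + h.natDegree := by
          rw [hf2, natDegree_mul (pow_ne_zero 2 (X_sub_C_ne_zero r)) hhne,
            natDegree_pow, natDegree_X_sub_C]
        have hhnn : ∀ t ∈ Icc (0:ℝ) 1, 0 ≤ h.eval t := by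
          intro t ht
          rcases ne_or_eq t r with hne | heq
          · have hfu := hf t ht
            rw [hf2, eval_mul, eval_pow, eval_sub, eval_X, eval_C] at hfu
            have hpos2 : 0 < (t - r)^2 := by
              have : t - r ≠ 0 := sub_ne_zero.mpr hne
              positivity
            nlinarith
          · subst heq
            refine eval_nonneg_of_right h t hr1 ?_
            intro u hu1 hu2
            have hfu := hf u ⟨by linarith [ht.1], hu2⟩
            rw [hf2, eval_mul, eval_pow, eval_sub, eval_X, eval_C] at hfu
            have hpos2 : 0 < (u - t)^2 := by
              have : u - t ≠ 0 := sub_ne_zero.mpr (by linarith)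
              positivity
            nlinarith
        have hrep := IH h.natDegree (by omega) h rfl hhnn
        rw [hf2, show n = 2 + h.natDegree by omega]
        refine PRep.mul (PRep.gen (PGen.sq (X - C r) 2 ?_)) hrep
        rw [natDegree_X_sub_C]
      · -- r ≥ 1
        obtain ⟨g, hg⟩ := dvd_iff_isRoot.mpr hr
        have hgne : g ≠ 0 := by rintro rfl; rw [mul_zero] at hg; exact hf0 hg
        have hf2 : f = (C r - X) * (-g) := by rw [hg]; ring
        have hgne2 : (-g) ≠ 0 := neg_ne_zero.mpr hgne
        have hdg : f.natDegree = 1 + (-g).natDegree := by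
          rw [hf2, natDegree_mul ?_ hgne2]
          · rw [show C r - (X:ℝ[X]) = -(X - C r) by ring, natDegree_neg, natDegree_X_sub_C]
          · rw [show C r - (X:ℝ[X]) = -(X - C r) by ring]
            exact neg_ne_zero.mpr (X_sub_C_ne_zero r)
        have hgnn : ∀ t ∈ Icc (0:ℝ) 1, 0 ≤ (-g).eval t := by
          intro t ht
          rcases eq_or_lt_of_le (le_trans ht.2 hr1) with heq | hlt
          · -- t = r, forces t = 1 = r
            have ht1 : t = 1 := le_antisymm ht.2 (by linarith [heq ▸ hr1])
            subst ht1
            refine eval_nonneg_of_left (-g) 1 one_pos ?_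
            intro u hu1 hu2
            have hfu := hf u ⟨hu1, le_of_lt hu2⟩
            rw [hg, eval_mul, eval_sub, eval_X, eval_C] at hfu
            rw [eval_neg]
            nlinarith
          · have hfu := hf t ht
            rw [hg, eval_mul, eval_sub, eval_X, eval_C] at hfu
            rw [eval_neg]
            nlinarith
        have hrep := IH (-g).natDegree (by omega) (-g) rfl hgnn
        rw [hf2, show n = 1 + (-g).natDegree by omega]
        exact PRep.mul (PRep.C_sub_X hr1) hrep
    · -- no real root: take complex root
      have hdegpos : 0 < f.degree := natDegree_pos_iff_degree_pos.mp (by omega)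
      set fC := f.map (algebraMap ℝ ℂ) with hfC
      have hdC : 0 < fC.degree := by
        rwa [degree_map_eq_of_injective (algebraMap ℝ ℂ).injective]
      obtain ⟨z, hz⟩ := Complex.exists_root hdC
      have hz' : fC.eval z = 0 := hz
      have him : z.im ≠ 0 := by
        intro h0
        apply hroot
        refine ⟨z.re, ?_⟩
        have h1 : z = ((z.re : ℝ) : ℂ) := by
          apply Complex.ext <;> simp [h0]
        have h2 : fC.eval ((algebraMap ℝ ℂ) z.re) = 0 := by
          rw [show ((algebraMap ℝ ℂ) z.re : ℂ) = ((z.re:ℝ):ℂ) from rfl, ← h1]; exact hz'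
        rw [hfC, eval_map, eval₂_at_apply] at h2
        show f.eval z.re = 0
        have h3 : ((f.eval z.re : ℝ) : ℂ) = 0 := h2
        exact_mod_cast h3
      have hconj : fC.eval ((starRingEnd ℂ) z) = 0 := by
        have h1 : (starRingEnd ℂ) (fC.eval z) = fC.eval ((starRingEnd ℂ) z) := by
          rw [hfC, eval_map, eval_map, hom_eval₂]
          congr 1
          ext x
          simp
        rw [← h1, hz', _root_.map_zero]
      set Q : ℝ[X] := (X - C z.re)^2 + C (z.im^2) with hQ
      have hQmonic : Q.Monic := by
        refine Monic.add_of_left ((monic_X_sub_C z.re).pow 2) ?_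
        have h1 : ((X - C z.re)^2 : ℝ[X]).degree = 2 := by
          rw [degree_pow, degree_X_sub_C]; rfl
        rw [h1]
        exact lt_of_le_of_lt degree_C_le (by norm_num)
      have hQdeg : Q.natDegree = 2 := by
        have h1 : Q.degree = 2 := by
          rw [hQ]
          have h2 : ((X - C z.re)^2 : ℝ[X]).degree = 2 := by
            rw [degree_pow, degree_X_sub_C]; rfl
          rw [← h2]
          refine degree_add_eq_left_of_degree_lt ?_
          rw [h2]
          exact lt_of_le_of_lt degree_C_le (by norm_num)
        exact natDegree_eq_of_degree_eq_some h1
      have hQmap : Q.map (algebraMap ℝ ℂ) = (X - C z) * (X - C ((starRingEnd ℂ) z)) := by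
        have hzre : (C z : ℂ[X]) = C ((z.re : ℂ)) + C ((z.im : ℂ)) * C Complex.I := by
          rw [← _root_.map_mul, ← _root_.map_add]
          congr 1
          exact (Complex.re_add_im z).symm
        have hzconj : (C ((starRingEnd ℂ) z) : ℂ[X]) = C ((z.re : ℂ)) - C ((z.im : ℂ)) * C Complex.I := by
          rw [← _root_.map_mul, ← _root_.map_sub]
          congr 1
          apply Complex.ext <;> simp
        have hI : (C Complex.I : ℂ[X])^2 = -1 := by
          rw [← _root_.map_pow, Complex.I_sq, _root_.map_neg, _root_.map_one]
        simp only [hQ, Polynomial.map_add, Polynomial.map_pow, Polynomial.map_sub, map_X, map_C]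
        rw [hzre, hzconj]
        have hcast : (C ((z.im^2 : ℝ) : ℂ) : ℂ[X]) = (C ((z.im : ℂ)))^2 := by
          rw [← _root_.map_pow]
          congr 1
          push_cast
          ring
        have hcast2 : (C ((z.re : ℝ) : ℂ) : ℂ[X]) = C ((z.re:ℂ)) := rfl
        rw [show (algebraMap ℝ ℂ) (z.re) = ((z.re : ℝ) : ℂ) from rfl,
            show (algebraMap ℝ ℂ) (z.im^2) = ((z.im^2 : ℝ) : ℂ) from rfl]
        rw [hcast]
        calc (X - C ((z.re:ℝ):ℂ))^2 + (C ((z.im:ℂ)))^2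
            = (X - (C ((z.re:ℂ)) + C ((z.im:ℂ)) * C Complex.I)) *
              (X - (C ((z.re:ℂ)) - C ((z.im:ℂ)) * C Complex.I))
              + (C ((z.im:ℂ)))^2 * ((C Complex.I)^2 + 1) := by ring
          _ = (X - (C ((z.re:ℂ)) + C ((z.im:ℂ)) * C Complex.I)) *
              (X - (C ((z.re:ℂ)) - C ((z.im:ℂ)) * C Complex.I)) := by
              rw [hI]; ring
      have hdvd : Q ∣ f := by
        rw [← map_dvd_map (algebraMap ℝ ℂ) (algebraMap ℝ ℂ).injective hQmonic, hQmap]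
        have hzne : z - (starRingEnd ℂ) z ≠ 0 := by
          intro h
          apply him
          have : z = (starRingEnd ℂ) z := by linear_combination h
          exact Complex.conj_eq_iff_im.mp this.symm
        refine IsCoprime.mul_dvd ?_ (dvd_iff_isRoot.mpr hz') (dvd_iff_isRoot.mpr hconj)
        refine ⟨-(C (z - (starRingEnd ℂ) z)⁻¹), C (z - (starRingEnd ℂ) z)⁻¹, ?_⟩
        rw [show -(C (z - (starRingEnd ℂ) z)⁻¹) * (X - C z) + C (z - (starRingEnd ℂ) z)⁻¹ * (X - C ((starRingEnd ℂ) z))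
          = C (z - (starRingEnd ℂ) z)⁻¹ * (C z - C ((starRingEnd ℂ) z)) by ring]
        rw [← _root_.map_sub, ← _root_.map_mul, inv_mul_cancel₀ hzne, _root_.map_one]
      obtain ⟨h, hh⟩ := hdvd
      have hQpos : ∀ t : ℝ, 0 < Q.eval t := by
        intro t
        rw [hQ]
        simp only [eval_add, eval_pow, eval_sub, eval_X, eval_C]
        have h1 : 0 < z.im^2 := by positivity
        nlinarith [sq_nonneg (t - z.re)]
      have hhne : h ≠ 0 := by rintro rfl; rw [mul_zero] at hh; exact hf0 hh
      have hdd : f.natDegree = 2 + h.natDegree := by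
        rw [hh, natDegree_mul hQmonic.ne_zero hhne, hQdeg]
      have hhnn : ∀ t ∈ Icc (0:ℝ) 1, 0 ≤ h.eval t := by
        intro t ht
        have hfu := hf t ht
        rw [hh, eval_mul] at hfu
        exact (mul_nonneg_iff_of_pos_left (hQpos t)).mp hfu
      have hrep := IH h.natDegree (by omega) h rfl hhnn
      rw [hh, show n = 2 + h.natDegree by omega]
      exact PRep.mul (PRep.quad (sq_nonneg z.im)) hrep

def Lfun (s : ℕ) (y : ℕ → ℝ) : ℝ[X] →ₗ[ℝ] ℝ :=
  ∑ k ∈ Finset.range (2*s+2), y k • lcoeff ℝ k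

lemma Lfun_apply (s : ℕ) (y : ℕ → ℝ) (f : ℝ[X]) :
    Lfun s y f = ∑ k ∈ Finset.range (2*s+2), y k * f.coeff k := by
  simp [Lfun, LinearMap.sum_apply, lcoeff_apply]

lemma Lfun_monomial (s : ℕ) (y : ℕ → ℝ) (c : ℝ) (m : ℕ) (hm : m ≤ 2*s+1) :
    Lfun s y ((monomial m) c) = y m * c := by
  rw [Lfun_apply]
  rw [Finset.sum_eq_single m]
  · rw [coeff_monomial, if_pos rfl]
  · intro k _ hk
    rw [coeff_monomial, if_neg (Ne.symm hk), mul_zero]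
  · intro hm2
    exfalso
    exact hm2 (Finset.mem_range.mpr (by omega))

lemma poly_as_fin_sum {s : ℕ} (q : ℝ[X]) (hq : q.natDegree ≤ s) :
    q = ∑ a ∈ Finset.range (s+1), (monomial a) (q.coeff a) :=
  as_sum_range' q (s+1) (by omega)

lemma Lfun_sq {s : ℕ} (y : ℕ → ℝ) (q : ℝ[X]) (hq : q.natDegree ≤ s) :
    Lfun s y (q^2) = ∑ a ∈ Finset.range (s+1), ∑ b ∈ Finset.range (s+1),
      q.coeff a * q.coeff b * y (a + b) := by
  conv_lhs => rw [poly_as_fin_sum q hq]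
  rw [sq, Finset.sum_mul_sum]
  rw [_root_.map_sum]
  apply Finset.sum_congr rfl
  intro a ha
  rw [_root_.map_sum]
  apply Finset.sum_congr rfl
  intro b hb
  rw [monomial_mul_monomial, Lfun_monomial]
  · ring
  · simp only [Finset.mem_range] at ha hb
    omega

lemma Lfun_X_mul_sq {s : ℕ} (y : ℕ → ℝ) (q : ℝ[X]) (hq : q.natDegree ≤ s) :
    Lfun s y (X * q^2) = ∑ a ∈ Finset.range (s+1), ∑ b ∈ Finset.range (s+1),
      q.coeff a * q.coeff b * y (a + b + 1) := by
  conv_lhs => rw [poly_as_fin_sum q hq]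
  rw [sq, Finset.sum_mul_sum, Finset.mul_sum, _root_.map_sum]
  apply Finset.sum_congr rfl
  intro a ha
  rw [Finset.mul_sum, _root_.map_sum]
  apply Finset.sum_congr rfl
  intro b hb
  rw [monomial_mul_monomial, ← monomial_one_one_eq_X, monomial_mul_monomial, Lfun_monomial]
  · ring_nf
  · simp only [Finset.mem_range] at ha hb
    omega

lemma Lfun_one_sub_X_mul_sq {s : ℕ} (y : ℕ → ℝ) (q : ℝ[X]) (hq : q.natDegree ≤ s) :
    Lfun s y ((1 - X) * q^2) = ∑ a ∈ Finset.range (s+1), ∑ b ∈ Finset.range (s+1),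
      q.coeff a * q.coeff b * (y (a + b) - y (a + b + 1)) := by
  have h1 : ((1:ℝ[X]) - X) * q^2 = q^2 - X * q^2 := by ring
  rw [h1, _root_.map_sub, Lfun_sq y q hq, Lfun_X_mul_sq y q hq, ← Finset.sum_sub_distrib]
  apply Finset.sum_congr rfl
  intro a _
  rw [← Finset.sum_sub_distrib]
  apply Finset.sum_congr rfl
  intro b _
  ring

lemma quad_of_psd {s : ℕ} {M : Matrix (Fin (s+1)) (Fin (s+1)) ℝ} (h : M.PosSemidef)
    (x : Fin (s+1) → ℝ) : 0 ≤ ∑ a, ∑ b, x a * x b * M a b := by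
  have h2 := h.dotProduct_mulVec_nonneg x
  have hstar : star x = x := by funext i; exact star_trivial _
  rw [hstar] at h2
  simp only [dotProduct, Matrix.mulVec] at h2
  calc (0:ℝ) ≤ ∑ a, x a * ∑ b, M a b * x b := h2
  _ = ∑ a, ∑ b, x a * x b * M a b := by
      apply Finset.sum_congr rfl
      intro a _
      rw [Finset.mul_sum]
      apply Finset.sum_congr rfl
      intro b _
      ring

lemma fin_sum_conv {s : ℕ} (F : ℕ → ℕ → ℝ) :
    ∑ a ∈ Finset.range (s+1), ∑ b ∈ Finset.range (s+1), F a b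
      = ∑ a : Fin (s+1), ∑ b : Fin (s+1), F (a:ℕ) (b:ℕ) := by
  rw [Finset.sum_range (fun a => ∑ b ∈ Finset.range (s+1), F a b)]
  apply Finset.sum_congr rfl
  intro a _
  rw [Finset.sum_range]

theorem Lfun_nonneg {s : ℕ} {y : ℕ → ℝ} (h3 : (H3 s y).PosSemidef)
    (h4 : (H4 s y).PosSemidef) {f : ℝ[X]} (hf : PRep (2*s+1) f) :
    0 ≤ Lfun s y f := by
  have hX : ∀ q : ℝ[X], q.natDegree ≤ s → 0 ≤ Lfun s y (X * q^2) := by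
    intro q hq
    rw [Lfun_X_mul_sq y q hq, fin_sum_conv]
    exact quad_of_psd h3 (fun a => q.coeff a)
  have hY : ∀ q : ℝ[X], q.natDegree ≤ s → 0 ≤ Lfun s y ((1 - X) * q^2) := by
    intro q hq
    rw [Lfun_one_sub_X_mul_sq y q hq, fin_sum_conv]
    exact quad_of_psd h4 (fun a => q.coeff a)
  have hgen : ∀ g : ℝ[X], PGen (2*s+1) g → 0 ≤ Lfun s y g := by
    intro g hg
    cases hg with
    | sq p _ hp =>
      have h1 : (p^2 : ℝ[X]) = X * p^2 + (1 - X) * p^2 := by ring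
      rw [h1, _root_.map_add]
      have := hX p (by omega)
      have := hY p (by omega)
      linarith
    | xsq p _ hp => exact hX p (by omega)
    | ysq p _ hp => exact hY p (by omega)
    | xysq p _ hp =>
      have h1 : (X * (1 - X) * p^2 : ℝ[X]) = X * ((1 - X) * p)^2 + (1 - X) * (X * p)^2 := by
        ring
      rw [h1, _root_.map_add]
      have hd1 : ((1 - X) * p : ℝ[X]).natDegree ≤ s := by
        refine le_trans natDegree_mul_le ?_
        have h2 : (1 - X : ℝ[X]).natDegree ≤ 1 := le_trans (natDegree_sub_le _ _) (by simp)
        omega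
      have hd2 : (X * p : ℝ[X]).natDegree ≤ s := by
        refine le_trans natDegree_mul_le ?_
        have h2 : (X : ℝ[X]).natDegree ≤ 1 := natDegree_X_le
        omega
      have := hX _ hd1
      have := hY _ hd2
      linarith
  refine AddSubmonoid.closure_induction (motive := fun g _ => 0 ≤ Lfun s y g) ?_ ?_ ?_ hf
  · exact hgen
  · show (0:ℝ) ≤ Lfun s y 0
    rw [_root_.map_zero]
  · intro a b _ _ h1 h2
    show 0 ≤ Lfun s y (a + b)
    rw [_root_.map_add]
    linarith




variable (m : ℕ)

abbrev EE (m : ℕ) := Fin (m+1) → ℝ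

def curve (m : ℕ) (t : ℝ) : EE m := fun k => t ^ (k : ℕ)

def Scurve (m : ℕ) : Set (EE m) := curve m '' Icc 0 1

def Kc (m : ℕ) : Set (EE m) := convexHull ℝ (Scurve m)

def Cc (m : ℕ) : Set (EE m) := {z | ∃ (r : ℝ) (x : EE m), 0 ≤ r ∧ x ∈ Kc m ∧ z = r • x}

lemma curve_continuous : Continuous (curve m) := by
  apply continuous_pi
  intro k
  exact continuous_pow _

lemma Scurve_compact : IsCompact (Scurve m) :=
  isCompact_Icc.image (curve_continuous m)

lemma curve_mem_K {t : ℝ} (ht : t ∈ Icc (0:ℝ) 1) : curve m t ∈ Kc m :=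
  subset_convexHull ℝ _ ⟨t, ht, rfl⟩

lemma K_coord_zero : ∀ x ∈ Kc m, x 0 = 1 := by
  intro x hx
  have hsub : Scurve m ⊆ {z : EE m | z 0 = 1} := by
    rintro z ⟨t, _, rfl⟩
    simp [curve]
  have hconv : Convex ℝ {z : EE m | z 0 = 1} := by
    intro p hp q hq a b ha hb hab
    simp only [mem_setOf_eq] at *
    simp [hp, hq]
    linarith
  exact convexHull_min hsub hconv hx

lemma C_convex : Convex ℝ (Cc m) := by
  rintro z1 ⟨r1, x1, hr1, hx1, rfl⟩ z2 ⟨r2, x2, hr2, hx2, rfl⟩ a b ha hb hab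
  have hK : Convex ℝ (Kc m) := convex_convexHull ℝ _
  rcases eq_or_lt_of_le (by positivity : (0:ℝ) ≤ a * r1 + b * r2) with heq | hlt
  · refine ⟨0, x1, le_refl 0, hx1, ?_⟩
    have h1 : a * r1 = 0 := by nlinarith
    have h2 : b * r2 = 0 := by nlinarith
    simp [smul_smul, h1, h2]
  · set ρ := a * r1 + b * r2
    refine ⟨ρ, (a * r1 / ρ) • x1 + (b * r2 / ρ) • x2, le_of_lt hlt, ?_, ?_⟩
    · refine hK hx1 hx2 (by positivity) (by positivity) ?_
      field_simp; rfl
    · rw [smul_add, smul_smul, smul_smul, smul_smul, smul_smul]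
      rw [mul_div_cancel₀ _ (ne_of_gt hlt), mul_div_cancel₀ _ (ne_of_gt hlt)]

lemma C_smul {r : ℝ} (hr : 0 ≤ r) {z : EE m} (hz : z ∈ Cc m) : r • z ∈ Cc m := by
  obtain ⟨r', x, hr', hx, rfl⟩ := hz
  exact ⟨r * r', x, mul_nonneg hr hr', hx, smul_smul r r' x⟩

lemma zero_mem_C : (0 : EE m) ∈ Cc m :=
  ⟨0, curve m 0, le_refl 0, curve_mem_K m ⟨le_refl 0, zero_le_one⟩, (zero_smul ℝ _).symm⟩

-- Caratheodory: K is the image of a compact set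
def simplexSet (m : ℕ) : Set (Fin (m+2) → ℝ) := stdSimplex ℝ (Fin (m+2))

def cubeSet (m : ℕ) : Set (Fin (m+2) → ℝ) := Set.pi univ (fun _ => Icc (0:ℝ) 1)

def Phi (m : ℕ) : (Fin (m+2) → ℝ) × (Fin (m+2) → ℝ) → EE m :=
  fun p => ∑ i, p.1 i • curve m (p.2 i)

lemma Phi_continuous : Continuous (Phi m) := by
  apply continuous_finset_sum
  intro i _
  exact ((continuous_apply i).comp continuous_fst).smul
    ((curve_continuous m).comp ((continuous_apply i).comp continuous_snd))

lemma K_eq_image : Kc m = Phi m '' ((simplexSet m) ×ˢ (cubeSet m)) := by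
  apply Subset.antisymm
  · intro x hx
    obtain ⟨ι, hι, zf, w, hrange, hindep, hwpos, hwsum, hsum⟩ :=
      eq_pos_convex_span_of_mem_convexHull hx
    letI := hι
    have hcard : Fintype.card ι ≤ m + 2 := by
      have h1 := hindep.card_le_finrank_succ
      have h2 : Module.finrank ℝ (vectorSpan ℝ (Set.range zf)) ≤ Module.finrank ℝ (EE m) :=
        Submodule.finrank_le _
      have h3 : Module.finrank ℝ (EE m) = m + 1 := by
        rw [Module.finrank_fintype_fun_eq_card]
        simp
      calc Fintype.card ι ≤ Module.finrank ℝ (vectorSpan ℝ (Set.range zf)) + 1 := h1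
        _ ≤ Module.finrank ℝ (EE m) + 1 := by omega
        _ = m + 2 := by rw [h3]
    set c := Fintype.card ι with hc
    have he : ι ≃ Fin c := Fintype.equivFin ι
    have hτ : ∀ i : ι, ∃ τ ∈ Icc (0:ℝ) 1, curve m τ = zf i := by
      intro i
      obtain ⟨τ, hτ1, hτ2⟩ := hrange (mem_range_self i)
      exact ⟨τ, hτ1, hτ2⟩
    choose τ hτIcc hτeq using hτ
    set w' : Fin (m+2) → ℝ := fun j => if h : (j:ℕ) < c then w (he.symm ⟨j, h⟩) else 0 with hw'
    set t' : Fin (m+2) → ℝ := fun j => if h : (j:ℕ) < c then τ (he.symm ⟨j, h⟩) else 0 with ht'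
    have hemb : ∀ j : Fin (m+2), ((j:ℕ) < c) ↔ j ∈ Finset.univ.map (Fin.castLEEmb (by omega : c ≤ m+2)) := by
      intro j
      constructor
      · intro h
        refine Finset.mem_map.mpr ⟨⟨(j:ℕ), h⟩, Finset.mem_univ _, ?_⟩
        apply Fin.ext
        simp
      · rintro h
        obtain ⟨i, _, rfl⟩ := Finset.mem_map.mp h
        simp
    have hsum_w' : ∀ (M : Type) [AddCommMonoid M] (F : ℝ → ℝ → M), (∀ x, F 0 x = 0) →
        ∑ j, F (w' j) (t' j) = ∑ i : ι, F (w i) (τ i) := by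
      intro M _ F hF0
      rw [← Finset.sum_subset (Finset.subset_univ (Finset.univ.map (Fin.castLEEmb (by omega : c ≤ m+2))))
        (by
          intro j _ hj
          have : ¬ ((j:ℕ) < c) := fun h => hj ((hemb j).mp h)
          rw [hw']
          simp only [dif_neg this]
          exact hF0 _)]
      rw [Finset.sum_map]
      rw [← Equiv.sum_comp he.symm (fun i => F (w i) (τ i))]
      apply Finset.sum_congr rfl
      intro i _
      have h1 : ((Fin.castLEEmb (by omega : c ≤ m+2) i : Fin (m+2)) : ℕ) < c := by simp
      have h2 : (⟨((Fin.castLEEmb (by omega : c ≤ m+2) i : Fin (m+2)) : ℕ), h1⟩ : Fin c) = i := by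
        apply Fin.ext; simp
      rw [hw', ht']
      simp only [dif_pos h1, h2]
    refine ⟨(w', t'), ⟨?_, ?_⟩, ?_⟩
    · constructor
      · intro j
        rw [hw']
        by_cases h : (j:ℕ) < c
        · simp only [dif_pos h]; exact le_of_lt (hwpos _)
        · simp only [dif_neg h]; exact le_refl 0
      · have hs := hsum_w' ℝ (fun a _ => a) (fun _ => rfl)
        have hs2 : (∑ j, w' j) = ∑ i : ι, w i := hs
        have hwsum2 : (∑ i : ι, w i) = 1 := hwsum
        exact hs2.trans hwsum2
    · intro j _
      rw [ht']
      by_cases h : (j:ℕ) < c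
      · simp only [dif_pos h]; exact hτIcc _
      · simp only [dif_neg h]; exact ⟨le_refl 0, zero_le_one⟩
    · show (∑ j, w' j • curve m (t' j)) = x
      have hs : (∑ j, w' j • curve m (t' j)) = ∑ i : ι, w i • curve m (τ i) :=
        hsum_w' (EE m) (fun a t => a • curve m t) (fun t => zero_smul ℝ _)
      have hsum2 : (∑ i : ι, w i • zf i) = x := hsum
      refine hs.trans ?_
      rw [← hsum2]
      refine Finset.sum_congr rfl fun i _ => ?_
      rw [hτeq]
  · rintro z ⟨⟨w, t⟩, ⟨hw, ht⟩, rfl⟩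
    show (∑ i, w i • curve m (t i)) ∈ Kc m
    refine Convex.sum_mem (convex_convexHull ℝ _) (fun i _ => hw.1 i) hw.2 ?_
    intro i _
    exact curve_mem_K m (ht i (mem_univ i))

lemma K_compact : IsCompact (Kc m) := by
  rw [K_eq_image]
  refine IsCompact.image ?_ (Phi_continuous m)
  exact (isCompact_stdSimplex ℝ _).prod (isCompact_univ_pi (fun _ => isCompact_Icc))

lemma C_closed : IsClosed (Cc m) := by
  apply isClosed_of_closure_subset
  intro z hz
  set D := (fun p : ℝ × EE m => p.1 • p.2) '' ((Icc 0 (z 0 + 1)) ×ˢ Kc m) with hD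
  have hDcomp : IsCompact D :=
    (isCompact_Icc.prod (K_compact m)).image continuous_smul
  have hCU : Cc m ∩ {w : EE m | w 0 < z 0 + 1} ⊆ D := by
    rintro a ⟨⟨r, x, hr, hx, rfl⟩, ha⟩
    have hx0 : x 0 = 1 := K_coord_zero m x hx
    have ha0 : (r • x) 0 = r := by
      simp [Pi.smul_apply, hx0]
    refine ⟨(r, x), ⟨⟨hr, ?_⟩, hx⟩, rfl⟩
    rw [mem_setOf_eq, ha0] at ha
    exact le_of_lt ha
  have hzD : z ∈ closure D := by
    rw [mem_closure_iff_nhds] at hz ⊢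
    intro V hV
    have hU : {w : EE m | w 0 < z 0 + 1} ∈ nhds z := by
      have hopen : IsOpen {w : EE m | w 0 < z 0 + 1} := by
        have : Continuous (fun w : EE m => w 0) := continuous_apply 0
        exact isOpen_Iio.preimage this
      exact hopen.mem_nhds (by simp)
    obtain ⟨a, haV, haC⟩ := hz (V ∩ {w : EE m | w 0 < z 0 + 1}) (Filter.inter_mem hV hU)
    exact ⟨a, haV.1, hCU ⟨haC, haV.2⟩⟩
  rw [hDcomp.isClosed.closure_eq] at hzD
  obtain ⟨⟨r, x⟩, ⟨⟨hr, _⟩, hx⟩, rfl⟩ := hzD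
  exact ⟨r, x, hr, hx, rfl⟩

theorem moment_rep (y : ℕ → ℝ)
    (hL : ∀ f : ℝ[X], f.natDegree ≤ m → (∀ t ∈ Icc (0:ℝ) 1, 0 ≤ f.eval t) →
      0 ≤ ∑ k ∈ Finset.range (m+1), f.coeff k * y k) :
    ∃ (N : ℕ) (w t : Fin N → ℝ), (∀ i, 0 ≤ w i) ∧ (∀ i, t i ∈ Icc (0:ℝ) 1) ∧
      ∀ k ≤ m, y k = ∑ i, w i * (t i)^k := by
  classical
  set Y : EE m := fun k => y (k : ℕ) with hY
  have hYC : Y ∈ Cc m := by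
    by_contra hYC
    obtain ⟨f, u, hfa, hfy⟩ :=
      geometric_hahn_banach_closed_point (C_convex m) (C_closed m) hYC
    have hu0 : 0 < u := by
      have := hfa 0 (zero_mem_C m)
      rwa [_root_.map_zero] at this
    have hfle : ∀ a ∈ Cc m, f a ≤ 0 := by
      intro a ha
      by_contra hpos
      push_neg at hpos
      have hscale := hfa (((u+1)/f a) • a) (C_smul m (by positivity) ha)
      rw [_root_.map_smul] at hscale
      rw [smul_eq_mul, div_mul_cancel₀ _ (ne_of_gt hpos)] at hscale
      linarith
    -- basis vectors
    set e : Fin (m+1) → EE m := fun k => fun j => if k = j then 1 else 0 with he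
    have hexp : ∀ z : EE m, f z = ∑ k, z k * f (e k) := by
      intro z
      conv_lhs => rw [pi_eq_sum_univ z]
      rw [_root_.map_sum]
      apply Finset.sum_congr rfl
      intro k _
      rw [_root_.map_smul, smul_eq_mul]
    -- the polynomial
    set g : ℝ[X] := ∑ k : Fin (m+1), C (f (e k)) * X ^ (k:ℕ) with hg
    have hgdeg : g.natDegree ≤ m := by
      refine le_trans (natDegree_sum_le _ _) ?_
      rw [Finset.fold_max_le]
      constructor
      · omega
      · intro k _
        refine le_trans (natDegree_C_mul_le _ _) ?_
        rw [natDegree_X_pow]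
        omega
    have hgeval : ∀ t : ℝ, g.eval t = f (curve m t) := by
      intro t
      rw [hexp (curve m t), hg]
      rw [eval_finset_sum]
      apply Finset.sum_congr rfl
      intro k _
      rw [eval_mul, eval_C, eval_pow, eval_X]
      show f (e k) * t ^ (k:ℕ) = curve m t k * f (e k)
      rw [curve]
      ring
    have hgcoeff : ∀ k : Fin (m+1), g.coeff (k:ℕ) = f (e k) := by
      intro k
      rw [hg, finset_sum_coeff]
      rw [Finset.sum_eq_single k]
      · rw [coeff_C_mul, coeff_X_pow, if_pos rfl, mul_one]
      · intro b _ hb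
        rw [coeff_C_mul, coeff_X_pow, if_neg, mul_zero]
        intro hbk
        exact hb (Fin.ext hbk.symm)
      · intro hk
        exact absurd (Finset.mem_univ k) hk
    -- q := -g is nonneg on [0,1]
    have hq := hL (-g) (by rwa [natDegree_neg]) ?_
    · rw [Finset.sum_range (fun k => (-g).coeff k * y k)] at hq
      have hq2 : ∀ k : Fin (m+1), (-g).coeff (k:ℕ) * y (k:ℕ) = -(Y k * f (e k)) := by
        intro k
        rw [coeff_neg, hgcoeff k, hY]
        ring
      rw [Finset.sum_congr rfl (fun k _ => hq2 k), Finset.sum_neg_distrib] at hq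
      have hfY : f Y = ∑ k, Y k * f (e k) := hexp Y
      have : f Y ≤ 0 := by
        rw [hfY]
        linarith
      linarith [hfy]
    · intro t ht
      rw [eval_neg, hgeval t]
      have : curve m t ∈ Cc m :=
        ⟨1, curve m t, zero_le_one, curve_mem_K m ht, (one_smul ℝ _).symm⟩
      linarith [hfle _ this]
  -- extract representation
  obtain ⟨r, x, hr, hx, hYrx⟩ := hYC
  rw [K_eq_image] at hx
  obtain ⟨⟨w, t⟩, ⟨hw, ht⟩, hxw⟩ := hx
  refine ⟨m + 2, fun i => r * w i, t, ?_, ?_, ?_⟩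
  · intro i
    exact mul_nonneg hr (hw.1 i)
  · intro i
    exact ht i (mem_univ i)
  · intro k hk
    have hYk : Y ⟨k, by omega⟩ = y k := rfl
    rw [← hYk, hYrx]
    rw [← hxw]
    show r * (Phi m (w, t)) ⟨k, by omega⟩ = _
    rw [Phi]
    rw [Finset.sum_apply]
    rw [Finset.mul_sum]
    apply Finset.sum_congr rfl
    intro i _
    rw [Pi.smul_apply, smul_eq_mul]
    show r * (w i * curve m (t i) ⟨k, by omega⟩) = r * w i * t i ^ k
    rw [curve]
    ring


/-- a binary symmetric tensor of odd order `d = 2s+1` is CP iff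
`H₃(y) ⪰ 0` and `H₄(y) ⪰ 0` for the associated moment sequence `y`. -/
theorem stmt9 (s : ℕ) (A : (Fin (2 * s + 1) → Fin 2) → ℝ)
    (hSym : IsSymTensor (2 * s + 1) A) :
    IsCP (2 * s + 1) A ↔
      (H3 s (momSeq (2 * s + 1) A)).PosSemidef ∧
        (H4 s (momSeq (2 * s + 1) A)).PosSemidef := by
  constructor
  · rintro ⟨r, v, hv, rfl⟩
    exact necessity v hv
  · rintro ⟨h3, h4⟩
    set y := momSeq (2 * s + 1) A with hy
    have hLnn : ∀ f : ℝ[X], f.natDegree ≤ 2*s+1 → (∀ t ∈ Icc (0:ℝ) 1, 0 ≤ f.eval t) →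
        0 ≤ ∑ k ∈ Finset.range (2*s+1+1), f.coeff k * y k := by
      intro f hdf hfpos
      have hrep : PRep (2*s+1) f := (prep_of_nonneg f hfpos).mono hdf
      have h1 := Lfun_nonneg h3 h4 hrep
      rw [Lfun_apply] at h1
      have h2 : ∑ k ∈ Finset.range (2*s+2), y k * f.coeff k
          = ∑ k ∈ Finset.range (2*s+1+1), f.coeff k * y k := by
        apply Finset.sum_congr (by norm_num)
        intro k _
        ring
      rwa [h2] at h1
    obtain ⟨N, w, t, hw, ht, hyk⟩ := moment_rep (2*s+1) y hLnn
    set α : Fin N → ℝ := fun i => (w i) ^ ((((2*s+1:ℕ)):ℝ))⁻¹ with hα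
    have hαnn : ∀ i, 0 ≤ α i := fun i => Real.rpow_nonneg (hw i) _
    have hαpow : ∀ i, (α i) ^ (2*s+1) = w i := by
      intro i
      exact Real.rpow_inv_natCast_pow (hw i) (by omega)
    set v : Fin N → Fin 2 → ℝ := fun i => ![α i * (1 - t i), α i * t i] with hvdef
    have hv : ∀ i j, 0 ≤ v i j := by
      intro i j
      fin_cases j
      · show 0 ≤ α i * (1 - t i)
        have := (ht i).2
        have h1 : 0 ≤ 1 - t i := by linarith
        exact mul_nonneg (hαnn i) h1
      · show 0 ≤ α i * t i
        exact mul_nonneg (hαnn i) (ht i).1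
    set B : (Fin (2*s+1) → Fin 2) → ℝ := ∑ i, tpow (2*s+1) (v i) with hB
    have hmomB : ∀ k ≤ 2*s+1, momSeq (2*s+1) B k = y k := by
      intro k hk
      rw [hB, momSeq_sum_tpow v k hk, hyk k hk]
      apply Finset.sum_congr rfl
      intro i _
      have h01 : v i 0 + v i 1 = α i := by
        show α i * (1 - t i) + α i * t i = α i
        ring
      have h1 : v i 1 = α i * t i := rfl
      rw [h01, h1, mul_pow, ← mul_assoc, ← pow_add]
      rw [show 2*s+1-k+k = 2*s+1 by omega, hαpow i]
    have hAB : A = B := by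
      apply Lmul_matT_inj (d := 2*s+1)
      apply symTensor_ext (Lmul_sym matT hSym) (Lmul_sym matT (sum_tpow_sym v))
      intro k hk
      have hA1 : Lmul (2*s+1) matT A (canon (2*s+1) k) = y k := rfl
      have hB1 : Lmul (2*s+1) matT B (canon (2*s+1) k) = momSeq (2*s+1) B k := rfl
      rw [hA1, hB1, hmomB k hk]
    exact ⟨N, v, hv, hAB⟩
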